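/- Let α ≥ 1, C > 0, and (q_j) a sequence in [0,1] with q_j → 0 satisfying q_{j+1} ≤ q_j² + C·3^{−jα} for all j. Then there exist a constant c > 0 and j_1 ∈ ℕ such that q_{j_1+j} ≤ (1/2)·3^{−αj} for all j ≥ 1; consequently there exists c' > 0 such that for all r ≥ 1, inf over j with 3^{j_1+j} ≤ r of q_{j_1+j} is at most c'·r^{−α}. -/

import Mathlib

/-- bootstrap from `q_j → 0` with
`q_{j+1} ≤ q_j² + C 3^{-jα}` to polynomial decay
`q_{j₁+j} ≤ (1/2) 3^{-αj}`, and the interpolation to all integers `r`. -/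
theorem stmt10 (α C : ℝ) (hα : 1 ≤ α) (hC : 0 < C)
    (q : ℕ → ℝ) (hq : ∀ j, q j ∈ Set.Icc (0 : ℝ) 1)
    (hlim : Filter.Tendsto q Filter.atTop (nhds 0))
    (hrec : ∀ j, q (j + 1) ≤ (q j) ^ 2 + C * (3 : ℝ) ^ (-(j : ℝ) * α)) :
    ∃ j₁ : ℕ,
      (∀ j : ℕ, 1 ≤ j → q (j₁ + j) ≤ (1 / 2) * (3 : ℝ) ^ (-α * j)) ∧
      ∃ c' : ℝ, 0 < c' ∧ ∀ r : ℕ, 1 ≤ r →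
        sInf {x : ℝ | ∃ j : ℕ, 3 ^ (j₁ + j) ≤ r ∧ x = q (j₁ + j)} ≤
          c' * (r : ℝ) ^ (-α) := by
  have h3 : (1:ℝ) ≤ 3 := by norm_num
  have h3' : (0:ℝ) < 3 := by norm_num
  have hα0 : 0 < α := lt_of_lt_of_le one_pos hα
  have hε : (0:ℝ) < (1/4) * (3:ℝ) ^ (-α) := by positivity
  obtain ⟨N₁, hN₁⟩ := Metric.tendsto_atTop.mp hlim _ hε
  obtain ⟨m, hm⟩ := exists_nat_gt (4*C)
  set j₁ := max (max N₁ (m+1)) 1 with hj₁def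
  have hj₁1 : 1 ≤ j₁ := le_max_right _ _
  have hj₁N : N₁ ≤ j₁ := le_trans (le_max_left _ _) (le_max_left _ _)
  have hj₁m : m + 1 ≤ j₁ := le_trans (le_max_right _ _) (le_max_left _ _)
  have hq1 : q j₁ ≤ (1/4) * (3:ℝ)^(-α) := by
    have h := hN₁ j₁ hj₁N
    rw [Real.dist_eq, sub_zero] at h
    exact (le_abs_self _).trans h.le
  have hCkey : C * (3:ℝ) ^ (-(((j₁:ℝ) - 1) * α)) ≤ 1/4 := by
    have h1 : (4*C : ℝ) ≤ (3:ℝ) ^ (((j₁:ℝ) - 1) * α) := by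
      have hm3 : (m:ℝ) < (3:ℝ)^(m:ℕ) := by exact_mod_cast (Nat.lt_pow_self (by norm_num : 1 < 3) : m < 3 ^ m)
      have hle : (3:ℝ)^((m:ℝ)) ≤ (3:ℝ) ^ (((j₁:ℝ) - 1) * α) := by
        apply Real.rpow_le_rpow_of_exponent_le h3
        have hmj : (m:ℝ) ≤ (j₁:ℝ) - 1 := by
          have : ((m:ℝ) + 1) ≤ j₁ := by exact_mod_cast hj₁m
          linarith
        nlinarith [Nat.cast_nonneg (α := ℝ) m]
      calc (4*C:ℝ) ≤ (m:ℝ) := hm.le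
        _ ≤ (3:ℝ)^((m:ℝ)) := by rw [Real.rpow_natCast]; exact hm3.le
        _ ≤ _ := hle
    rw [Real.rpow_neg h3'.le]
    have hp : (0:ℝ) < (3:ℝ)^(((j₁:ℝ)-1)*α) := Real.rpow_pos_of_pos h3' _
    calc C * ((3:ℝ)^(((j₁:ℝ)-1)*α))⁻¹ ≤ C * (4*C)⁻¹ :=
          mul_le_mul_of_nonneg_left (inv_anti₀ (by positivity) h1) hC.le
      _ = 1/4 := by field_simp
  have main : ∀ j : ℕ, 1 ≤ j → q (j₁ + j) ≤ (1/2) * (3:ℝ)^(-α * (j:ℝ)) := by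
    intro j hj
    induction j, hj using Nat.le_induction with
    | base =>
      have h := hrec j₁
      obtain ⟨h0, h1⟩ := hq j₁
      have hsq : q j₁ ^ 2 ≤ q j₁ := by nlinarith
      have hCterm : C * (3:ℝ)^(-(j₁:ℝ)*α) ≤ (1/4) * (3:ℝ)^(-α) := by
        have he : (3:ℝ)^(-(j₁:ℝ)*α) = (3:ℝ)^(-(((j₁:ℝ)-1)*α)) * (3:ℝ)^(-α) := by
          rw [← Real.rpow_add h3']; ring_nf
        rw [he, ← mul_assoc]
        exact mul_le_mul_of_nonneg_right hCkey (Real.rpow_pos_of_pos h3' _).le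
      have hcast : -α * ((1:ℕ):ℝ) = -α := by push_cast; ring
      rw [hcast]
      calc q (j₁ + 1) ≤ q j₁ ^2 + C * (3:ℝ)^(-(j₁:ℝ)*α) := h
        _ ≤ (1/4)*(3:ℝ)^(-α) + (1/4)*(3:ℝ)^(-α) := add_le_add (hsq.trans hq1) hCterm
        _ = (1/2)*(3:ℝ)^(-α) := by ring
    | succ j hj ih =>
      have h := hrec (j₁ + j)
      obtain ⟨h0, _⟩ := hq (j₁ + j)
      have hsq : q (j₁+j)^2 ≤ ((1/2) * (3:ℝ)^(-α*(j:ℝ)))^2 := pow_le_pow_left₀ h0 ih 2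
      have e1 : ((1/2) * (3:ℝ)^(-α*(j:ℝ)))^2 = (1/4) * (3:ℝ)^(-α*(j:ℝ) + -α*(j:ℝ)) := by
        rw [Real.rpow_add h3']; ring
      have e2 : (3:ℝ)^(-α*(j:ℝ) + -α*(j:ℝ)) ≤ (3:ℝ)^(-α*((j:ℝ)+1)) := by
        apply Real.rpow_le_rpow_of_exponent_le h3
        have hj' : (1:ℝ) ≤ (j:ℝ) := by exact_mod_cast hj
        nlinarith
      have hCterm : C * (3:ℝ)^(-((j₁+j:ℕ):ℝ)*α) ≤ (1/4) * (3:ℝ)^(-α*((j:ℝ)+1)) := by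
        have he : (3:ℝ)^(-((j₁+j:ℕ):ℝ)*α)
            = (3:ℝ)^(-(((j₁:ℝ)-1)*α)) * (3:ℝ)^(-α*((j:ℝ)+1)) := by
          rw [← Real.rpow_add h3']; push_cast; ring_nf
        rw [he, ← mul_assoc]
        exact mul_le_mul_of_nonneg_right hCkey (Real.rpow_pos_of_pos h3' _).le
      have hgc : -α * (((j+1:ℕ)):ℝ) = -α*((j:ℝ)+1) := by push_cast; ring
      rw [hgc, ← Nat.add_assoc]
      calc q (j₁ + j + 1) ≤ q (j₁+j)^2 + C * (3:ℝ)^(-((j₁+j:ℕ):ℝ)*α) := h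
        _ ≤ (1/4) * (3:ℝ)^(-α*(j:ℝ) + -α*(j:ℝ)) + (1/4) * (3:ℝ)^(-α*((j:ℝ)+1)) := by
            refine add_le_add (hsq.trans_eq e1 |>.trans ?_) hCterm
            rfl
        _ ≤ (1/4) * (3:ℝ)^(-α*((j:ℝ)+1)) + (1/4) * (3:ℝ)^(-α*((j:ℝ)+1)) :=
            add_le_add (by nlinarith) le_rfl
        _ = (1/2)*(3:ℝ)^(-α*((j:ℝ)+1)) := by ring
  refine ⟨j₁, main, (3:ℝ)^(((j₁:ℝ)+1)*α), Real.rpow_pos_of_pos h3' _, ?_⟩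
  intro r hr
  have hr0 : (0:ℝ) < (r:ℝ) := by exact_mod_cast hr
  by_cases hS : ∃ j : ℕ, 3 ^ (j₁ + j) ≤ r
  · obtain ⟨j₀, hj₀⟩ := hS
    have hj₀r : j₀ ≤ r := by
      have h1 : j₀ < 3 ^ (j₁ + j₀) :=
        lt_of_le_of_lt (Nat.le_add_left j₀ j₁) (Nat.lt_pow_self (by norm_num : 1 < 3) : j₁ + j₀ < 3 ^ (j₁ + j₀))
      omega
    set j := Nat.findGreatest (fun j => 3 ^ (j₁ + j) ≤ r) r with hjdef
    have hPj : 3 ^ (j₁ + j) ≤ r := Nat.findGreatest_spec (P := fun j => 3 ^ (j₁ + j) ≤ r) hj₀r hj₀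
    have hub : r < 3 ^ (j₁ + (j+1)) := by
      by_cases hc : j + 1 ≤ r
      · have hng := Nat.findGreatest_is_greatest (P := fun j => 3 ^ (j₁ + j) ≤ r)
          (Nat.lt_succ_self j) hc
        exact Nat.lt_of_not_le hng
      · push_neg at hc
        have h1 : j < 3 ^ (j₁ + (j+1)) := by
          calc j < 3 ^ j := Nat.lt_pow_self (by norm_num : 1 < 3)
          _ ≤ 3 ^ (j₁ + (j+1)) := Nat.pow_le_pow_right (by norm_num) (by omega)
        omega
    have hbdd : BddBelow {x : ℝ | ∃ j' : ℕ, 3 ^ (j₁ + j') ≤ r ∧ x = q (j₁ + j')} := by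
      refine ⟨0, ?_⟩
      rintro x ⟨j', -, rfl⟩
      exact (hq _).1
    refine le_trans (csInf_le hbdd ⟨j, hPj, rfl⟩) ?_
    have hqj : q (j₁+j) ≤ (3:ℝ)^(-α*(j:ℝ)) := by
      rcases Nat.eq_zero_or_pos j with h0 | h1
      · rw [h0]; push_cast; rw [mul_zero, Real.rpow_zero]
        simpa using (hq j₁).2
      · exact (main j h1).trans (by nlinarith [Real.rpow_pos_of_pos h3' (-α*(j:ℝ))])
    have hrα : (r:ℝ)^α ≤ (3:ℝ)^(((j₁:ℝ)+(j:ℝ)+1)*α) := by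
      have h1 : (r:ℝ) ≤ (3:ℝ)^((j₁+(j+1) : ℕ)) := by
        have : ((r:ℕ):ℝ) ≤ ((3 ^ (j₁ + (j+1)) : ℕ) : ℝ) := by exact_mod_cast hub.le
        simpa using this
      calc (r:ℝ)^α ≤ ((3:ℝ)^((j₁+(j+1):ℕ)))^α :=
            Real.rpow_le_rpow hr0.le h1 hα0.le
        _ = (3:ℝ)^(((j₁:ℝ)+(j:ℝ)+1)*α) := by
            rw [← Real.rpow_natCast 3 (j₁+(j+1)), ← Real.rpow_mul h3'.le]
            push_cast; ring_nf
    have hinv : (3:ℝ)^(-(((j₁:ℝ)+(j:ℝ)+1)*α)) ≤ (r:ℝ)^(-α) := by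
      rw [Real.rpow_neg h3'.le, Real.rpow_neg hr0.le]
      exact inv_anti₀ (Real.rpow_pos_of_pos hr0 α) hrα
    calc q (j₁+j) ≤ (3:ℝ)^(-α*(j:ℝ)) := hqj
      _ = (3:ℝ)^(((j₁:ℝ)+1)*α) * (3:ℝ)^(-(((j₁:ℝ)+(j:ℝ)+1)*α)) := by
          rw [← Real.rpow_add h3']; ring_nf
      _ ≤ (3:ℝ)^(((j₁:ℝ)+1)*α) * (r:ℝ)^(-α) :=
          mul_le_mul_of_nonneg_left hinv (Real.rpow_pos_of_pos h3' _).le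
  · have hempty : {x : ℝ | ∃ j : ℕ, 3 ^ (j₁ + j) ≤ r ∧ x = q (j₁ + j)} = ∅ := by
      ext x
      simp only [Set.mem_setOf_eq, Set.mem_empty_iff_false, iff_false]
      rintro ⟨j, hj, -⟩
      exact hS ⟨j, hj⟩
    rw [hempty, Real.sInf_empty]
    positivity
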